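/- Every simple module over the 0-Ariki-Koike-Shoji algebra H_{n,r}(0) is one-dimensional over ℂ. -/

import Mathlib

noncomputable section

open Polynomial

namespace AKS0

/-- Generators: `Sum.inl i` is `T_{i+1}` (0-indexed `T_i`, acting on positions `i, i+1`),
`Sum.inr j` is `ξ_{j+1}` (0-indexed `ξ_j`). -/
abbrev Gen (n : ℕ) : Type := Fin (n - 1) ⊕ Fin n

abbrev FreeAKS (n : ℕ) : Type := FreeAlgebra ℂ (Gen n)

def tGen (n : ℕ) (i : Fin (n - 1)) : FreeAKS n := FreeAlgebra.ι ℂ (Sum.inl i)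

def xGen (n : ℕ) (j : Fin n) : FreeAKS n := FreeAlgebra.ι ℂ (Sum.inr j)

/-- The position `i` of `Fin (n-1)`, viewed in `Fin n`. -/
def idx0 (n : ℕ) (i : Fin (n - 1)) : Fin n := ⟨i.1, by have := i.2; omega⟩

/-- The position `i+1` of `Fin n`, for `i : Fin (n-1)`. -/
def idx1 (n : ℕ) (i : Fin (n - 1)) : Fin n := ⟨i.1 + 1, by have := i.2; omega⟩

/-- The Lagrange polynomial `P_k(X) = ∏_{l ≠ k} (X - u_l)/(u_k - u_l)`. -/
def lagPoly (r : ℕ) (u : Fin r → ℂ) (k : Fin r) : ℂ[X] :=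
  ∏ l ∈ Finset.univ.erase k, (C ((u k - u l)⁻¹) * (X - C (u l)))

/-- The defining relations of the Ariki-Koike-Shoji algebra `H_{n,r}(q)`. -/
inductive Rel (n r : ℕ) (u : Fin r → ℂ) (q : ℂ) : FreeAKS n → FreeAKS n → Prop
  | quad (i : Fin (n - 1)) :
      Rel n r u q ((tGen n i - algebraMap ℂ (FreeAKS n) q) * (tGen n i + 1)) 0
  | braid (i j : Fin (n - 1)) (h : (j : ℕ) = (i : ℕ) + 1) :
      Rel n r u q (tGen n i * tGen n j * tGen n i) (tGen n j * tGen n i * tGen n j)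
  | commTT (i j : Fin (n - 1)) (h : (i : ℕ) + 2 ≤ (j : ℕ) ∨ (j : ℕ) + 2 ≤ (i : ℕ)) :
      Rel n r u q (tGen n i * tGen n j) (tGen n j * tGen n i)
  | xPoly (j : Fin n) :
      Rel n r u q (Polynomial.aeval (xGen n j) (∏ l : Fin r, (X - C (u l)))) 0
  | commXX (i j : Fin n) :
      Rel n r u q (xGen n i * xGen n j) (xGen n j * xGen n i)
  | cross (i : Fin (n - 1)) :
      Rel n r u q (tGen n i * xGen n (idx0 n i))
        (xGen n (idx1 n i) * tGen n i -
          (q - 1) • ∑ p ∈ Finset.univ.filter (fun p : Fin r × Fin r => p.1 < p.2),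
            (u p.2 - u p.1) •
              (Polynomial.aeval (xGen n (idx0 n i)) (lagPoly r u p.1) *
                Polynomial.aeval (xGen n (idx1 n i)) (lagPoly r u p.2)))
  | sumComm (i : Fin (n - 1)) :
      Rel n r u q (tGen n i * (xGen n (idx1 n i) + xGen n (idx0 n i)))
        ((xGen n (idx1 n i) + xGen n (idx0 n i)) * tGen n i)
  | commTX (i : Fin (n - 1)) (j : Fin n) (h : j ≠ idx0 n i) (h' : j ≠ idx1 n i) :
      Rel n r u q (tGen n i * xGen n j) (xGen n j * tGen n i)

/-- The Ariki-Koike-Shoji algebra `H_{n,r}(q)` (Shoji's presentation, normalized). -/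
abbrev AKSAlg (n r : ℕ) (u : Fin r → ℂ) (q : ℂ) : Type := RingQuot (Rel n r u q)

/-- The generator `T_i` in `H_{n,r}(q)`. -/
def Ti (n r : ℕ) (u : Fin r → ℂ) (q : ℂ) (i : Fin (n - 1)) : AKSAlg n r u q :=
  RingQuot.mkAlgHom ℂ (Rel n r u q) (tGen n i)

/-- The generator `ξ_j` in `H_{n,r}(q)`. -/
def Xi (n r : ℕ) (u : Fin r → ℂ) (q : ℂ) (j : Fin n) : AKSAlg n r u q :=
  RingQuot.mkAlgHom ℂ (Rel n r u q) (xGen n j)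

/-- `L_c = P_{c_1}(ξ_1) ⋯ P_{c_n}(ξ_n)`. -/
def Lc (n r : ℕ) (u : Fin r → ℂ) (q : ℂ) (c : Fin n → Fin r) : AKSAlg n r u q :=
  (List.ofFn fun j : Fin n => Polynomial.aeval (Xi n r u q j) (lagPoly r u (c j))).prod

end AKS0

namespace AKS0Aux

variable {M : Type} [AddCommGroup M] [Module ℂ M]

/-- The word `W k = π (m+2-k) ⋯ π m * π (m+1)` (with `W 0 = 1`). -/
def chainW (π : ℕ → Module.End ℂ M) (m : ℕ) : ℕ → Module.End ℂ M
  | 0 => 1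
  | (k+1) => π (m + 1 - k) * chainW π m k

lemma chainW_comm (π : ℕ → Module.End ℂ M)
    (hcm : ∀ i j, i + 2 ≤ j → π i * π j = π j * π i) (m : ℕ) :
    ∀ k j, j + k ≤ m → π j * chainW π m k = chainW π m k * π j := by
  intro k
  induction k with
  | zero => intro j _; simp [chainW]
  | succ k ih =>
    intro j hj
    have h1 : π j * π (m + 1 - k) = π (m + 1 - k) * π j := hcm j (m+1-k) (by omega)
    rw [chainW, ← mul_assoc, h1, mul_assoc, ih j (by omega), ← mul_assoc]

lemma chainW_fix (π : ℕ → Module.End ℂ M) (hid : ∀ i, π i * π i = π i) (m k : ℕ) :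
    π (m + 1 - k) * chainW π m (k+1) = chainW π m (k+1) := by
  rw [chainW, ← mul_assoc, hid]

lemma chainW_slide (π : ℕ → Module.End ℂ M)
    (hid : ∀ i, π i * π i = π i)
    (hbr : ∀ i, π i * π (i+1) * π i = π (i+1) * π i * π (i+1))
    (hcm : ∀ i j, i + 2 ≤ j → π i * π j = π j * π i) (m : ℕ) :
    ∀ k, k ≤ m + 1 → ∀ i, m + 2 - k < i → i ≤ m + 1 →
      π i * chainW π m k = chainW π m k * π (i - 1) := by
  intro k
  induction k with
  | zero => intro _ i hi hi'; omega
  | succ k ih =>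
    intro hk i hi hi'
    rcases Nat.lt_or_ge k 1 with hk1 | hk1
    · interval_cases k
      omega
    rcases Nat.lt_or_ge (m + 2 - k) i with hgt | hle
    · -- i > m+2-k : commute past the new bottom letter
      have hcomm : π (m + 1 - k) * π i = π i * π (m + 1 - k) := hcm (m+1-k) i (by omega)
      rw [chainW, ← mul_assoc, ← hcomm, mul_assoc, ih (by omega) i hgt hi', ← mul_assoc]
    · -- i = m+2-k : braid
      have hieq : i = m + 2 - k := by omega
      subst hieq
      obtain ⟨k', rfl⟩ : ∃ k', k = k' + 1 := ⟨k - 1, by omega⟩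
      have hb : m + 1 - k' = m + 2 - (k' + 1) := by omega
      have hWk : chainW π m (k'+1) = π (m + 2 - (k'+1)) * chainW π m k' := by
        rw [chainW, hb]
      set b := m + 1 - (k' + 1) with hbdef
      have hbi : m + 2 - (k'+1) = b + 1 := by omega
      have hbi' : m + 2 - (k'+1) - 1 = b := by omega
      have key : π (b+1) * (π b * π (b+1)) = π b * (π (b+1) * π b) := by
        have := hbr b
        rw [← mul_assoc, ← mul_assoc]
        linear_combination (norm := noncomm_ring) -this
      rw [hbi']
      calc π (m + 2 - (k'+1)) * chainW π m (k'+1+1)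
          = π (b+1) * (π b * (π (b+1) * chainW π m k')) := by
            rw [chainW, hWk, hbi, hbdef]
        _ = (π (b+1) * (π b * π (b+1))) * chainW π m k' := by
            rw [← mul_assoc, ← mul_assoc, ← mul_assoc]
        _ = (π b * (π (b+1) * π b)) * chainW π m k' := by rw [key]
        _ = π b * (π (b+1) * (π b * chainW π m k')) := by
            rw [← mul_assoc, ← mul_assoc, ← mul_assoc]
        _ = π b * (π (b+1) * (chainW π m k' * π b)) := by
            rw [chainW_comm π hcm m k' b (by omega)]
        _ = chainW π m (k'+1+1) * π b := by
            rw [chainW, hWk, hbi, hbdef]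
            noncomm_ring

/-- The chain lemma: a family of idempotents satisfying braid and distant-commutation
relations admits a nonzero "common quasi-eigenvector". -/
lemma chain_lemma (π : ℕ → Module.End ℂ M)
    (hid : ∀ i, π i * π i = π i)
    (hbr : ∀ i, π i * π (i+1) * π i = π (i+1) * π i * π (i+1))
    (hcm : ∀ i j, i + 2 ≤ j → π i * π j = π j * π i) :
    ∀ (m : ℕ) (v : M), v ≠ 0 →
      ∃ w : M, w ≠ 0 ∧ ∀ i, 1 ≤ i → i ≤ m → π i w = w ∨ π i w = 0 := by
  intro m
  induction m with
  | zero => intro v hv; exact ⟨v, hv, by omega⟩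
  | succ m ih =>
    intro v hv
    obtain ⟨v', hv', hgood⟩ := ih v hv
    classical
    set P : ℕ → Prop := fun k => chainW π m k v' ≠ 0 with hP
    have hP0 : P 0 := by simpa [hP, chainW] using hv'
    set K := Nat.findGreatest P (m+1) with hK
    have hPK : P K := Nat.findGreatest_spec (Nat.zero_le _) hP0
    have hKle : K ≤ m + 1 := Nat.findGreatest_le _
    have hKmax : ∀ k, K < k → k ≤ m + 1 → ¬ P k := fun k h1 h2 =>
      Nat.findGreatest_is_greatest h1 h2
    clear_value K
    refine ⟨chainW π m K v', hPK, ?_⟩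
    intro i hi1 hi2
    rcases Nat.lt_or_ge (i + K) (m+1) with hlow | hhigh
    · -- i + K ≤ m : commute through
      have := chainW_comm π hcm m K i (by omega)
      have happ : π i (chainW π m K v') = chainW π m K (π i v') := by
        have := congrArg (fun f => f v') this
        simpa [Module.End.mul_apply] using this
      rcases hgood i hi1 (by omega) with h | h
      · left; rw [happ, h]
      · right; rw [happ, h, map_zero]
    rcases Nat.lt_or_ge (m + 2 - K) i with hgt | hle
    · -- slide
      have := chainW_slide π hid hbr hcm m K hKle i hgt hi2
      have happ : π i (chainW π m K v') = chainW π m K (π (i-1) v') := by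
        have := congrArg (fun f => f v') this
        simpa [Module.End.mul_apply] using this
      rcases hgood (i-1) (by omega) (by omega) with h | h
      · left; rw [happ, h]
      · right; rw [happ, h, map_zero]
    rcases Nat.eq_or_lt_of_le hle with heq | hlt
    · -- i = m+2-K : fixed
      obtain ⟨K', rfl⟩ : ∃ K', K = K' + 1 := ⟨K - 1, by omega⟩
      have hmi : i = m + 1 - K' := by omega
      left
      have := chainW_fix π hid m K'
      have := congrArg (fun f => f v') this
      simpa [hmi, Module.End.mul_apply] using this
    · -- i = m+1-K : killed (next step is zero)
      have hiK : i = m + 1 - K := by omega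
      have hKm : K < m + 1 := by omega
      have hz : chainW π m (K+1) v' = 0 := by
        by_contra hne
        exact hKmax (K+1) (Nat.lt_succ_self K) (by omega) hne
      right
      rw [hiK]
      calc π (m + 1 - K) (chainW π m K v') = chainW π m (K+1) v' := rfl
        _ = 0 := hz

end AKS0Aux

namespace AKS0

section Main

variable (n r : ℕ) (u : Fin r → ℂ) (M : Type)
variable [AddCommGroup M] [Module ℂ M] [Module (AKSAlg n r u 0) M]
  [IsScalarTower ℂ (AKSAlg n r u 0) M]

/-- The representation of the free algebra on `M`. -/
def rhoF : FreeAKS n →ₐ[ℂ] Module.End ℂ M :=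
  (Algebra.lsmul ℂ ℂ M (A := AKSAlg n r u 0)).comp (RingQuot.mkAlgHom ℂ (Rel n r u 0))

lemma rhoF_rel {a b : FreeAKS n} (h : Rel n r u 0 a b) :
    rhoF n r u M a = rhoF n r u M b := by
  unfold rhoF
  simp only [AlgHom.comp_apply]
  rw [RingQuot.mkAlgHom_rel ℂ h]

/-- The operator by which `T_i` acts. -/
def Top (i : Fin (n - 1)) : Module.End ℂ M := rhoF n r u M (tGen n i)

/-- The operator by which `ξ_j` acts. -/
def Xop (j : Fin n) : Module.End ℂ M := rhoF n r u M (xGen n j)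

lemma relT2 (i : Fin (n - 1)) : Top n r u M i * Top n r u M i = - Top n r u M i := by
  have h := rhoF_rel n r u M (Rel.quad i)
  simp only [map_mul, map_sub, map_add, map_one, map_zero, AlgHom.commutes] at h
  unfold Top
  linear_combination (norm := noncomm_ring) h

lemma relBraid (i j : Fin (n - 1)) (h : (j : ℕ) = (i : ℕ) + 1) :
    Top n r u M i * Top n r u M j * Top n r u M i
      = Top n r u M j * Top n r u M i * Top n r u M j := by
  have h := rhoF_rel n r u M (Rel.braid i j h)
  simpa only [map_mul, Top] using h

lemma relTTcomm (i j : Fin (n - 1)) (h : (i : ℕ) + 2 ≤ (j : ℕ) ∨ (j : ℕ) + 2 ≤ (i : ℕ)) :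
    Top n r u M i * Top n r u M j = Top n r u M j * Top n r u M i := by
  have h := rhoF_rel n r u M (Rel.commTT i j h)
  simpa only [map_mul, Top] using h

lemma relXfull (j : Fin n) :
    Polynomial.aeval (Xop n r u M j) (∏ l : Fin r, (X - C (u l))) = 0 := by
  have h := rhoF_rel n r u M (Rel.xPoly j)
  rw [map_zero] at h
  rw [← h]
  exact Polynomial.aeval_algHom_apply (rhoF n r u M) (xGen n j) _

lemma relXX (i j : Fin n) :
    Xop n r u M i * Xop n r u M j = Xop n r u M j * Xop n r u M i := by
  have h := rhoF_rel n r u M (Rel.commXX i j)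
  simpa only [map_mul, Xop] using h

lemma relCross (i : Fin (n - 1)) :
    Top n r u M i * Xop n r u M (idx0 n i)
      = Xop n r u M (idx1 n i) * Top n r u M i +
        ∑ p ∈ Finset.univ.filter (fun p : Fin r × Fin r => p.1 < p.2),
          (u p.2 - u p.1) •
            (Polynomial.aeval (Xop n r u M (idx0 n i)) (lagPoly r u p.1) *
              Polynomial.aeval (Xop n r u M (idx1 n i)) (lagPoly r u p.2)) := by
  have h := rhoF_rel n r u M (Rel.cross i)
  simp only [map_mul, map_sub, map_sum, map_smul] at h
  unfold Top Xop
  rw [h]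
  simp only [Polynomial.aeval_algHom_apply]
  rw [zero_sub, neg_smul, one_smul, sub_neg_eq_add]

lemma relSum (i : Fin (n - 1)) :
    Top n r u M i * (Xop n r u M (idx1 n i) + Xop n r u M (idx0 n i))
      = (Xop n r u M (idx1 n i) + Xop n r u M (idx0 n i)) * Top n r u M i := by
  have h := rhoF_rel n r u M (Rel.sumComm i)
  simpa only [map_mul, map_add, Top, Xop] using h

lemma relTX (i : Fin (n - 1)) (j : Fin n) (h : j ≠ idx0 n i) (h' : j ≠ idx1 n i) :
    Top n r u M i * Xop n r u M j = Xop n r u M j * Top n r u M i := by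
  have h := rhoF_rel n r u M (Rel.commTX i j h h')
  simpa only [map_mul, Top, Xop] using h

/-! ### Polynomial facts about Lagrange basis polynomials -/

lemma lagPoly_eq_basis (k : Fin r) : lagPoly r u k = Lagrange.basis Finset.univ u k := rfl

/-- The full polynomial `∏ (X - u_l)`. -/
def fullP : ℂ[X] := ∏ l : Fin r, (X - C (u l))

lemma lagPoly_factor (k : Fin r) :
    lagPoly r u k = C (∏ l ∈ Finset.univ.erase k, (u k - u l)⁻¹) *
      ∏ l ∈ Finset.univ.erase k, (X - C (u l)) := by
  rw [lagPoly, Finset.prod_mul_distrib, map_prod]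

lemma fullP_factor (k : Fin r) :
    fullP r u = (X - C (u k)) * ∏ l ∈ Finset.univ.erase k, (X - C (u l)) :=
  (Finset.mul_prod_erase Finset.univ _ (Finset.mem_univ k)).symm

lemma fullP_dvd_mul (k k' : Fin r) (hkk' : k ≠ k') :
    fullP r u ∣ lagPoly r u k * lagPoly r u k' := by
  obtain ⟨t, ht⟩ : (X - C (u k)) ∣ ∏ l ∈ Finset.univ.erase k', (X - C (u l)) :=
    Finset.dvd_prod_of_mem _ (Finset.mem_erase.mpr ⟨hkk', Finset.mem_univ k⟩)
  refine ⟨C (∏ l ∈ Finset.univ.erase k, (u k - u l)⁻¹) *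
    C (∏ l ∈ Finset.univ.erase k', (u k' - u l)⁻¹) * t, ?_⟩
  rw [lagPoly_factor, lagPoly_factor, ht, fullP_factor r u k]
  ring

lemma lagPoly_X_mul (k : Fin r) :
    X * lagPoly r u k = C (u k) * lagPoly r u k +
      C (∏ l ∈ Finset.univ.erase k, (u k - u l)⁻¹) * fullP r u := by
  rw [lagPoly_factor, fullP_factor r u k]
  ring

/-! ### The commutative algebra generated by the `X` operators -/

def CC : Subalgebra ℂ (Module.End ℂ M) := Algebra.adjoin ℂ (Set.range (Xop n r u M))

def instCC : CommSemiring (CC n r u M) :=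
  Algebra.adjoinCommSemiringOfComm ℂ (by
    rintro a ⟨j, rfl⟩ b ⟨j', rfl⟩
    exact relXX n r u M j j')

attribute [local instance] instCC

set_option synthInstance.maxHeartbeats 1000000
set_option maxHeartbeats 1000000

def XC (j : Fin n) : CC n r u M := ⟨Xop n r u M j, Algebra.subset_adjoin ⟨j, rfl⟩⟩

def eC (j : Fin n) (k : Fin r) : CC n r u M := Polynomial.aeval (XC n r u M j) (lagPoly r u k)

def eop (j : Fin n) (k : Fin r) : Module.End ℂ M :=
  Polynomial.aeval (Xop n r u M j) (lagPoly r u k)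

lemma eC_val (j : Fin n) (k : Fin r) : ((eC n r u M j k : CC n r u M) : Module.End ℂ M) = eop n r u M j k :=
  (Polynomial.aeval_algHom_apply (CC n r u M).val (XC n r u M j) _).symm

lemma aeval_XC_val (p : ℂ[X]) (j : Fin n) :
    ((Polynomial.aeval (XC n r u M j) p : CC n r u M) : Module.End ℂ M)
      = Polynomial.aeval (Xop n r u M j) p :=
  (Polynomial.aeval_algHom_apply (CC n r u M).val (XC n r u M j) _).symm

lemma sum_eC (hr : 1 ≤ r) (hu : Function.Injective u) (j : Fin n) : ∑ k, eC n r u M j k = 1 := by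
  have : (∑ k, lagPoly r u k) = 1 := by
    have := Lagrange.sum_basis (Set.injOn_of_injective hu) (s := Finset.univ)
      ⟨⟨0, hr⟩, Finset.mem_univ _⟩
    simpa [lagPoly_eq_basis] using this
  unfold eC
  rw [← map_sum, this, map_one]

lemma aeval_fullP_XC (j : Fin n) : Polynomial.aeval (XC n r u M j) (fullP r u) = 0 := by
  apply Subtype.coe_injective
  show ((Polynomial.aeval (XC n r u M j) (fullP r u) : CC n r u M) : Module.End ℂ M)
      = ((0 : CC n r u M) : Module.End ℂ M)
  rw [aeval_XC_val]
  simpa [fullP] using relXfull n r u M j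

lemma eC_orth (hu : Function.Injective u) (j : Fin n) {k k' : Fin r} (hkk' : k ≠ k') :
    eC n r u M j k * eC n r u M j k' = 0 := by
  obtain ⟨t, ht⟩ := fullP_dvd_mul r u k k' hkk'
  unfold eC
  rw [← map_mul, ht, map_mul, aeval_fullP_XC, zero_mul]

lemma eC_idem (hr : 1 ≤ r) (hu : Function.Injective u) (j : Fin n) (k : Fin r) :
    eC n r u M j k * eC n r u M j k = eC n r u M j k := by
  have h1 : ∑ k', eC n r u M j k * eC n r u M j k' = eC n r u M j k := by
    rw [← Finset.mul_sum, sum_eC n r u M hr hu, mul_one]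
  have h2 : ∑ k', eC n r u M j k * eC n r u M j k' = eC n r u M j k * eC n r u M j k :=
    Finset.sum_eq_single k (fun k' _ hne => eC_orth n r u M hu j (Ne.symm hne))
      (fun h => absurd (Finset.mem_univ k) h)
  rw [← h2, h1]

lemma XC_mul_eC (j : Fin n) (k : Fin r) :
    XC n r u M j * eC n r u M j k = u k • eC n r u M j k := by
  have h := congrArg (Polynomial.aeval (XC n r u M j)) (lagPoly_X_mul r u k)
  simp only [map_mul, map_add, Polynomial.aeval_X, Polynomial.aeval_C] at h
  rw [aeval_fullP_XC n r u M, mul_zero, add_zero] at h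
  unfold eC
  rw [h, Algebra.smul_def]

/-! ### Weight idempotents -/

def bigEC (c : Fin n → Fin r) : CC n r u M := ∏ j, eC n r u M j (c j)

def Eop (c : Fin n → Fin r) : Module.End ℂ M := (bigEC n r u M c : Module.End ℂ M)

lemma sum_bigEC (hr : 1 ≤ r) (hu : Function.Injective u) : ∑ c : Fin n → Fin r, bigEC n r u M c = 1 := by
  classical
  have h := Finset.prod_univ_sum (fun _ : Fin n => (Finset.univ : Finset (Fin r)))
    (fun j k => eC n r u M j k)
  rw [Fintype.piFinset_univ] at h
  calc ∑ c : Fin n → Fin r, bigEC n r u M c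
      = ∏ j, ∑ k, eC n r u M j k := h.symm
    _ = 1 := by
        rw [Finset.prod_congr rfl fun j _ => sum_eC n r u M hr hu j]
        exact Finset.prod_const_one

lemma eC_mul_bigEC (hr : 1 ≤ r) (hu : Function.Injective u) (j : Fin n) (k : Fin r) (c : Fin n → Fin r) :
    eC n r u M j k * bigEC n r u M c
      = if k = c j then bigEC n r u M c else 0 := by
  classical
  have hsplit : bigEC n r u M c = eC n r u M j (c j) * ∏ l ∈ Finset.univ.erase j, eC n r u M l (c l) :=
    (Finset.mul_prod_erase Finset.univ _ (Finset.mem_univ j)).symm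
  by_cases hk : k = c j
  · subst hk
    rw [hsplit, ← mul_assoc, eC_idem n r u M hr hu, if_pos rfl]
  · rw [hsplit, ← mul_assoc, eC_orth n r u M hu j hk, zero_mul, if_neg hk]

lemma bigEC_mul_self (hr : 1 ≤ r) (hu : Function.Injective u) (c : Fin n → Fin r) :
    bigEC n r u M c * bigEC n r u M c = bigEC n r u M c := by
  unfold bigEC
  refine Finset.prod_mul_distrib.symm.trans ?_
  exact Finset.prod_congr rfl fun j _ => eC_idem n r u M hr hu j (c j)

lemma bigEC_orth (hu : Function.Injective u) {c d : Fin n → Fin r} (hcd : c ≠ d) :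
    bigEC n r u M c * bigEC n r u M d = 0 := by
  classical
  obtain ⟨j, hj⟩ : ∃ j, c j ≠ d j := by
    by_contra hcon
    push_neg at hcon
    exact hcd (funext hcon)
  have h1 : bigEC n r u M c = (∏ l ∈ Finset.univ.erase j, eC n r u M l (c l)) * eC n r u M j (c j) :=
    (Finset.prod_erase_mul Finset.univ _ (Finset.mem_univ j)).symm
  have h2 : bigEC n r u M d = eC n r u M j (d j) * ∏ l ∈ Finset.univ.erase j, eC n r u M l (d l) :=
    (Finset.mul_prod_erase Finset.univ _ (Finset.mem_univ j)).symm
  rw [h1, h2, mul_assoc, ← mul_assoc (eC n r u M j (c j)), eC_orth n r u M hu j hj,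
    zero_mul, mul_zero]

lemma XC_mul_bigEC (j : Fin n) (c : Fin n → Fin r) :
    XC n r u M j * bigEC n r u M c = u (c j) • bigEC n r u M c := by
  classical
  have hsplit : bigEC n r u M c = eC n r u M j (c j) * ∏ l ∈ Finset.univ.erase j, eC n r u M l (c l) :=
    (Finset.mul_prod_erase Finset.univ _ (Finset.mem_univ j)).symm
  rw [hsplit, ← mul_assoc, XC_mul_eC n r u M, smul_mul_assoc]

/-! ### End-level versions -/

lemma sum_Eop (hr : 1 ≤ r) (hu : Function.Injective u) : ∑ c : Fin n → Fin r, Eop n r u M c = 1 := by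
  have := congrArg (Subalgebra.val (CC n r u M)) (sum_bigEC n r u M hr hu)
  simpa [Eop, map_sum] using this

lemma Eop_orth (hu : Function.Injective u) {c d : Fin n → Fin r} (hcd : c ≠ d) :
    Eop n r u M c * Eop n r u M d = 0 := by
  have := congrArg (Subalgebra.val (CC n r u M)) (bigEC_orth n r u M hu hcd)
  simpa [Eop, map_mul] using this

lemma Eop_idem (hr : 1 ≤ r) (hu : Function.Injective u) (c : Fin n → Fin r) :
    Eop n r u M c * Eop n r u M c = Eop n r u M c := by
  have := congrArg (Subalgebra.val (CC n r u M)) (bigEC_mul_self n r u M hr hu c)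
  simpa [Eop, map_mul] using this

lemma Xop_mul_Eop (j : Fin n) (c : Fin n → Fin r) :
    Xop n r u M j * Eop n r u M c = u (c j) • Eop n r u M c := by
  have := congrArg (Subalgebra.val (CC n r u M)) (XC_mul_bigEC n r u M j c)
  simpa [Eop, XC, map_mul, map_smul] using this

/-! ### Purity -/

lemma comm_aeval (a x : Module.End ℂ M) (h : a * x = x * a) (p : ℂ[X]) :
    a * Polynomial.aeval x p = Polynomial.aeval x p * a := by
  induction p using Polynomial.induction_on' with
  | add p q hp hq => rw [map_add, mul_add, add_mul, hp, hq]
  | monomial m b =>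
      rw [Polynomial.aeval_monomial]
      have hx : a * x ^ m = x ^ m * a := by
        induction m with
        | zero => simp
        | succ m ih => rw [pow_succ, ← mul_assoc, ih, mul_assoc, h, ← mul_assoc]
      calc a * (algebraMap ℂ (Module.End ℂ M) b * x ^ m)
          = algebraMap ℂ (Module.End ℂ M) b * (a * x ^ m) := by
            rw [← mul_assoc, ← Algebra.commutes, mul_assoc]
        _ = algebraMap ℂ (Module.End ℂ M) b * x ^ m * a := by rw [hx, mul_assoc]

lemma aeval_eigen (x Y : Module.End ℂ M) (s : ℂ) (h : x * Y = s • Y) (p : ℂ[X]) :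
    Polynomial.aeval x p * Y = p.eval s • Y := by
  induction p using Polynomial.induction_on' with
  | add p q hp hq => rw [map_add, add_mul, hp, hq, Polynomial.eval_add, add_smul]
  | monomial m b =>
      rw [Polynomial.aeval_monomial, Polynomial.eval_monomial]
      have hx : x ^ m * Y = s ^ m • Y := by
        induction m with
        | zero => simp
        | succ m ih =>
            rw [pow_succ, pow_succ, mul_assoc, h, mul_smul_comm, ih, smul_smul, mul_comm]
      rw [mul_assoc, hx, mul_smul_comm, ← Algebra.smul_def, smul_smul, mul_comm]

/-- An operator `Y` is pure of weight `d` if `X_j Y = u_{d j} Y` for all `j`. -/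
def isPure (d : Fin n → Fin r) (Y : Module.End ℂ M) : Prop :=
  ∀ j, Xop n r u M j * Y = u (d j) • Y

lemma eop_mul_pure (hu : Function.Injective u) {d : Fin n → Fin r} {Y : Module.End ℂ M}
    (hY : isPure n r u M d Y) (j : Fin n) (k : Fin r) :
    eop n r u M j k * Y = (if k = d j then (1:ℂ) else 0) • Y := by
  have h := aeval_eigen M (Xop n r u M j) Y (u (d j)) (hY j) (lagPoly r u k)
  rw [eop, h]
  congr 1
  by_cases hk : k = d j
  · subst hk
    rw [if_pos rfl, lagPoly_eq_basis]
    exact Lagrange.eval_basis_self (Set.injOn_of_injective hu) (Finset.mem_univ (d j))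
  · rw [if_neg hk, lagPoly_eq_basis]
    exact Lagrange.eval_basis_of_ne hk (Finset.mem_univ (d j))

lemma Eop_mul_pure_self (hu : Function.Injective u) {d : Fin n → Fin r} {Y : Module.End ℂ M}
    (hY : isPure n r u M d Y) : Eop n r u M d * Y = Y := by
  classical
  have key : ∀ s : Finset (Fin n),
      ((∏ j ∈ s, eC n r u M j (d j) : CC n r u M) : Module.End ℂ M) * Y = Y := by
    intro s
    induction s using Finset.induction_on with
    | empty => simp; exact one_mul Y
    | insert _ _ ha ih =>
        rename_i a s'
        rw [Finset.prod_insert ha]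
        show ((eC n r u M a (d a) : CC n r u M) : Module.End ℂ M) *
          ((∏ x ∈ s', eC n r u M x (d x) : CC n r u M) : Module.End ℂ M) * Y = Y
        rw [eC_val, mul_assoc, ih, eop_mul_pure n r u M hu hY, if_pos rfl, one_smul]
  exact key Finset.univ

lemma Eop_mul_pure_ne (hu : Function.Injective u) {d : Fin n → Fin r} {Y : Module.End ℂ M}
    (hY : isPure n r u M d Y) {d' : Fin n → Fin r} (hne : d' ≠ d) :
    Eop n r u M d' * Y = 0 := by
  classical
  obtain ⟨j, hj⟩ : ∃ j, d' j ≠ d j := by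
    by_contra hcon
    push_neg at hcon
    exact hne (funext hcon)
  have h1 : bigEC n r u M d'
      = (∏ l ∈ Finset.univ.erase j, eC n r u M l (d' l)) * eC n r u M j (d' j) :=
    (Finset.prod_erase_mul Finset.univ _ (Finset.mem_univ j)).symm
  have : Eop n r u M d' = ((∏ l ∈ Finset.univ.erase j, eC n r u M l (d' l) : CC n r u M) :
      Module.End ℂ M) * eop n r u M j (d' j) := by
    rw [Eop, h1]
    push_cast [Subalgebra.coe_mul]
    rw [eC_val]
  rw [this, mul_assoc, eop_mul_pure n r u M hu hY, if_neg hj, zero_smul, mul_zero]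

/-! ### The swap of a weight -/

def Sw (i : Fin (n - 1)) (c : Fin n → Fin r) : Fin n → Fin r := fun p =>
  if p = idx0 n i then c (idx1 n i) else if p = idx1 n i then c (idx0 n i) else c p

lemma idx0_ne_idx1 (i : Fin (n - 1)) : idx0 n i ≠ idx1 n i := by
  simp only [idx0, idx1, ne_eq, Fin.mk.injEq]
  omega

lemma Sw_apply0 (i : Fin (n - 1)) (c : Fin n → Fin r) : Sw n r i c (idx0 n i) = c (idx1 n i) := by
  simp [Sw]

lemma Sw_apply1 (i : Fin (n - 1)) (c : Fin n → Fin r) : Sw n r i c (idx1 n i) = c (idx0 n i) := by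
  simp [Sw, (idx0_ne_idx1 n i).symm]

lemma Sw_apply_other (i : Fin (n - 1)) (c : Fin n → Fin r) (p : Fin n)
    (h0 : p ≠ idx0 n i) (h1 : p ≠ idx1 n i) : Sw n r i c p = c p := by
  simp [Sw, h0, h1]

lemma Sw_Sw (i : Fin (n - 1)) (c : Fin n → Fin r) : Sw n r i (Sw n r i c) = c := by
  funext p
  by_cases h0 : p = idx0 n i
  · subst h0; rw [Sw_apply0, Sw_apply1]
  · by_cases h1 : p = idx1 n i
    · subst h1; rw [Sw_apply1, Sw_apply0]
    · rw [Sw_apply_other n r i _ p h0 h1, Sw_apply_other n r i _ p h0 h1]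

lemma Sw_eq_of_eq (i : Fin (n - 1)) {c : Fin n → Fin r} (h : c (idx0 n i) = c (idx1 n i)) :
    Sw n r i c = c := by
  funext p
  by_cases h0 : p = idx0 n i
  · subst h0; rw [Sw_apply0, h]
  · by_cases h1 : p = idx1 n i
    · subst h1; rw [Sw_apply1, h]
    · rw [Sw_apply_other n r i _ p h0 h1]

lemma Sw_ne_of_ne (i : Fin (n - 1)) {c : Fin n → Fin r} (h : c (idx0 n i) ≠ c (idx1 n i)) :
    Sw n r i c ≠ c := by
  intro heq
  have := congrFun heq (idx0 n i)
  rw [Sw_apply0] at this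
  exact h this.symm

/-! ### Typed behaviour of `T_i E_c` -/

lemma eop_mul_Eop (hr : 1 ≤ r) (hu : Function.Injective u) (j : Fin n) (k : Fin r)
    (c : Fin n → Fin r) :
    eop n r u M j k * Eop n r u M c = if k = c j then Eop n r u M c else 0 := by
  have := congrArg (Subalgebra.val (CC n r u M)) (eC_mul_bigEC n r u M hr hu j k c)
  simp only [map_mul, map_zero, apply_ite (Subalgebra.val (CC n r u M))] at this
  simpa [Eop, eC_val] using this

lemma Eop_mul_Eop (hr : 1 ≤ r) (hu : Function.Injective u) (c d : Fin n → Fin r) :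
    Eop n r u M c * Eop n r u M d = if c = d then Eop n r u M d else 0 := by
  by_cases h : c = d
  · subst h; rw [if_pos rfl]; exact Eop_idem n r u M hr hu _
  · rw [if_neg h]; exact Eop_orth n r u M hu h

lemma Delta_mul_Eop (hr : 1 ≤ r) (hu : Function.Injective u) (i : Fin (n - 1))
    (c : Fin n → Fin r) :
    (∑ p ∈ Finset.univ.filter (fun p : Fin r × Fin r => p.1 < p.2),
        (u p.2 - u p.1) •
          (Polynomial.aeval (Xop n r u M (idx0 n i)) (lagPoly r u p.1) *
            Polynomial.aeval (Xop n r u M (idx1 n i)) (lagPoly r u p.2))) * Eop n r u M c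
      = (if c (idx0 n i) < c (idx1 n i) then u (c (idx1 n i)) - u (c (idx0 n i)) else 0)
          • Eop n r u M c := by
  classical
  show (∑ p ∈ Finset.univ.filter (fun p : Fin r × Fin r => p.1 < p.2),
      (u p.2 - u p.1) • (eop n r u M (idx0 n i) p.1 * eop n r u M (idx1 n i) p.2))
        * Eop n r u M c = _
  rw [Finset.sum_mul]
  have hterm : ∀ p ∈ Finset.univ.filter (fun p : Fin r × Fin r => p.1 < p.2),
      ((u p.2 - u p.1) • (eop n r u M (idx0 n i) p.1 * eop n r u M (idx1 n i) p.2))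
          * Eop n r u M c
        = if p = (c (idx0 n i), c (idx1 n i)) then
            (u (c (idx1 n i)) - u (c (idx0 n i))) • Eop n r u M c else 0 := by
    intro p _
    rw [smul_mul_assoc, mul_assoc, eop_mul_Eop n r u M hr hu]
    by_cases h2 : p.2 = c (idx1 n i)
    · rw [if_pos h2, eop_mul_Eop n r u M hr hu]
      by_cases h1 : p.1 = c (idx0 n i)
      · rw [if_pos h1, if_pos (Prod.ext h1 h2), h1, h2]
      · rw [if_neg h1, smul_zero, if_neg (fun hpe => h1 (by rw [hpe]))]
    · rw [if_neg h2, mul_zero, smul_zero, if_neg (fun hpe => h2 (by rw [hpe]))]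
  rw [Finset.sum_congr rfl hterm, Finset.sum_ite_eq']
  by_cases hlt : c (idx0 n i) < c (idx1 n i)
  · rw [if_pos (by simpa using hlt), if_pos hlt]
  · rw [if_neg (by simpa using hlt), if_neg hlt, zero_smul]

/-! ### The cross relations against weight idempotents -/

def DeltaOp (i : Fin (n - 1)) : Module.End ℂ M :=
  ∑ p ∈ Finset.univ.filter (fun p : Fin r × Fin r => p.1 < p.2),
    (u p.2 - u p.1) •
      (Polynomial.aeval (Xop n r u M (idx0 n i)) (lagPoly r u p.1) *
        Polynomial.aeval (Xop n r u M (idx1 n i)) (lagPoly r u p.2))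

lemma relCross' (i : Fin (n - 1)) :
    Top n r u M i * Xop n r u M (idx0 n i)
      = Xop n r u M (idx1 n i) * Top n r u M i + DeltaOp n r u M i :=
  relCross n r u M i

lemma DeltaOp_mul_Eop (hr : 1 ≤ r) (hu : Function.Injective u) (i : Fin (n - 1))
    (c : Fin n → Fin r) :
    DeltaOp n r u M i * Eop n r u M c
      = (if c (idx0 n i) < c (idx1 n i) then u (c (idx1 n i)) - u (c (idx0 n i)) else 0)
          • Eop n r u M c :=
  Delta_mul_Eop n r u M hr hu i c

lemma X1_mul_TE (hr : 1 ≤ r) (hu : Function.Injective u) (i : Fin (n - 1))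
    (c : Fin n → Fin r) :
    Xop n r u M (idx1 n i) * (Top n r u M i * Eop n r u M c)
      = u (c (idx0 n i)) • (Top n r u M i * Eop n r u M c)
        - (if c (idx0 n i) < c (idx1 n i) then u (c (idx1 n i)) - u (c (idx0 n i)) else 0)
            • Eop n r u M c := by
  have h1 : (Top n r u M i * Xop n r u M (idx0 n i)) * Eop n r u M c
      = (Xop n r u M (idx1 n i) * Top n r u M i) * Eop n r u M c
        + DeltaOp n r u M i * Eop n r u M c := by
    rw [relCross' n r u M i, add_mul]
  rw [mul_assoc, Xop_mul_Eop n r u M, mul_smul_comm, mul_assoc,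
    DeltaOp_mul_Eop n r u M hr hu] at h1
  exact (eq_sub_of_add_eq h1.symm)

lemma X0_mul_TE (i : Fin (n - 1)) (c : Fin n → Fin r) :
    Xop n r u M (idx0 n i) * (Top n r u M i * Eop n r u M c)
      = (u (c (idx0 n i)) + u (c (idx1 n i))) • (Top n r u M i * Eop n r u M c)
        - Xop n r u M (idx1 n i) * (Top n r u M i * Eop n r u M c) := by
  have h1 : (Xop n r u M (idx1 n i) + Xop n r u M (idx0 n i)) * (Top n r u M i * Eop n r u M c)
      = (u (c (idx0 n i)) + u (c (idx1 n i))) • (Top n r u M i * Eop n r u M c) := by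
    calc (Xop n r u M (idx1 n i) + Xop n r u M (idx0 n i)) * (Top n r u M i * Eop n r u M c)
        = ((Xop n r u M (idx1 n i) + Xop n r u M (idx0 n i)) * Top n r u M i) * Eop n r u M c := by
          rw [mul_assoc]
      _ = (Top n r u M i * (Xop n r u M (idx1 n i) + Xop n r u M (idx0 n i))) * Eop n r u M c := by
          rw [relSum n r u M i]
      _ = Top n r u M i * ((Xop n r u M (idx1 n i) + Xop n r u M (idx0 n i)) * Eop n r u M c) := by
          rw [mul_assoc]
      _ = Top n r u M i * ((u (c (idx1 n i)) + u (c (idx0 n i))) • Eop n r u M c) := by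
          rw [add_mul, Xop_mul_Eop n r u M, Xop_mul_Eop n r u M, add_smul]
      _ = (u (c (idx0 n i)) + u (c (idx1 n i))) • (Top n r u M i * Eop n r u M c) := by
          rw [mul_smul_comm, add_comm (u (c (idx1 n i)))]
  rw [← h1, add_mul]
  abel

lemma Xother_mul_TE (i : Fin (n - 1)) (c : Fin n → Fin r) (j : Fin n)
    (h0 : j ≠ idx0 n i) (h1 : j ≠ idx1 n i) :
    Xop n r u M j * (Top n r u M i * Eop n r u M c)
      = u (c j) • (Top n r u M i * Eop n r u M c) := by
  rw [← mul_assoc, ← relTX n r u M i j h0 h1, mul_assoc, Xop_mul_Eop n r u M, mul_smul_comm]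

lemma pure_TE_blk (hr : 1 ≤ r) (hu : Function.Injective u) (i : Fin (n - 1))
    {c : Fin n → Fin r} (h : c (idx0 n i) = c (idx1 n i)) :
    isPure n r u M c (Top n r u M i * Eop n r u M c) := by
  intro j
  by_cases h1 : j = idx1 n i
  · subst h1
    rw [X1_mul_TE n r u M hr hu, if_neg (by rw [h]; exact lt_irrefl _), zero_smul, sub_zero, h]
  · by_cases h0 : j = idx0 n i
    · subst h0
      rw [X0_mul_TE n r u M, X1_mul_TE n r u M hr hu,
        if_neg (by rw [h]; exact lt_irrefl _), zero_smul, sub_zero, add_smul, ← h]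
      abel
    · exact Xother_mul_TE n r u M i c j h0 h1

lemma pure_TE_desc (hr : 1 ≤ r) (hu : Function.Injective u) (i : Fin (n - 1))
    {c : Fin n → Fin r} (h : c (idx1 n i) < c (idx0 n i)) :
    isPure n r u M (Sw n r i c) (Top n r u M i * Eop n r u M c) := by
  have hnl : ¬ c (idx0 n i) < c (idx1 n i) := fun hc => absurd h (lt_asymm hc)
  intro j
  by_cases h1 : j = idx1 n i
  · subst h1
    rw [X1_mul_TE n r u M hr hu, if_neg hnl, zero_smul, sub_zero, Sw_apply1]
  · by_cases h0 : j = idx0 n i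
    · subst h0
      rw [X0_mul_TE n r u M, X1_mul_TE n r u M hr hu, if_neg hnl, zero_smul, sub_zero,
        Sw_apply0, add_smul]
      abel
    · rw [Xother_mul_TE n r u M i c j h0 h1, Sw_apply_other n r i c j h0 h1]

lemma pure_TE_asc (hr : 1 ≤ r) (hu : Function.Injective u) (i : Fin (n - 1))
    {c : Fin n → Fin r} (h : c (idx0 n i) < c (idx1 n i)) :
    isPure n r u M (Sw n r i c) (Top n r u M i * Eop n r u M c + Eop n r u M c) := by
  intro j
  by_cases h1 : j = idx1 n i
  · subst h1
    rw [mul_add, X1_mul_TE n r u M hr hu, if_pos h, Xop_mul_Eop n r u M, Sw_apply1, smul_add,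
      sub_smul]
    abel
  · by_cases h0 : j = idx0 n i
    · subst h0
      rw [mul_add, X0_mul_TE n r u M, X1_mul_TE n r u M hr hu, if_pos h,
        Xop_mul_Eop n r u M, Sw_apply0, smul_add, add_smul, sub_smul]
      abel
    · rw [mul_add, Xother_mul_TE n r u M i c j h0 h1, Sw_apply_other n r i c j h0 h1,
        Xop_mul_Eop n r u M, smul_add]

/-! ### Sandwich values `E_{c'} (T_i E_c)` -/

lemma TY_blk (hr : 1 ≤ r) (hu : Function.Injective u) (i : Fin (n - 1))
    {c : Fin n → Fin r} (h : c (idx0 n i) = c (idx1 n i)) (c' : Fin n → Fin r) :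
    Eop n r u M c' * (Top n r u M i * Eop n r u M c)
      = if c' = c then Top n r u M i * Eop n r u M c else 0 := by
  by_cases hc : c' = c
  · subst hc
    rw [if_pos rfl]
    exact Eop_mul_pure_self n r u M hu (pure_TE_blk n r u M hr hu i h)
  · rw [if_neg hc]
    exact Eop_mul_pure_ne n r u M hu (pure_TE_blk n r u M hr hu i h) hc

lemma TY_desc (hr : 1 ≤ r) (hu : Function.Injective u) (i : Fin (n - 1))
    {c : Fin n → Fin r} (h : c (idx1 n i) < c (idx0 n i)) (c' : Fin n → Fin r) :
    Eop n r u M c' * (Top n r u M i * Eop n r u M c)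
      = if c' = Sw n r i c then Top n r u M i * Eop n r u M c else 0 := by
  by_cases hc : c' = Sw n r i c
  · subst hc
    rw [if_pos rfl]
    exact Eop_mul_pure_self n r u M hu (pure_TE_desc n r u M hr hu i h)
  · rw [if_neg hc]
    exact Eop_mul_pure_ne n r u M hu (pure_TE_desc n r u M hr hu i h) hc

lemma TY_asc (hr : 1 ≤ r) (hu : Function.Injective u) (i : Fin (n - 1))
    {c : Fin n → Fin r} (h : c (idx0 n i) < c (idx1 n i)) (c' : Fin n → Fin r) :
    Eop n r u M c' * (Top n r u M i * Eop n r u M c)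
      = (if c' = Sw n r i c then Top n r u M i * Eop n r u M c + Eop n r u M c else 0)
        - (if c' = c then Eop n r u M c else 0) := by
  have hA : Eop n r u M c' * (Top n r u M i * Eop n r u M c + Eop n r u M c)
      = if c' = Sw n r i c then Top n r u M i * Eop n r u M c + Eop n r u M c else 0 := by
    by_cases hc : c' = Sw n r i c
    · subst hc
      rw [if_pos rfl]
      exact Eop_mul_pure_self n r u M hu (pure_TE_asc n r u M hr hu i h)
    · rw [if_neg hc]
      exact Eop_mul_pure_ne n r u M hu (pure_TE_asc n r u M hr hu i h) hc
  have hB : Eop n r u M c' * Eop n r u M c = if c' = c then Eop n r u M c else 0 :=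
    Eop_mul_Eop n r u M hr hu c' c
  calc Eop n r u M c' * (Top n r u M i * Eop n r u M c)
      = Eop n r u M c' * (Top n r u M i * Eop n r u M c + Eop n r u M c)
        - Eop n r u M c' * Eop n r u M c := by rw [mul_add]; abel
    _ = _ := by rw [hA, hB]

/-! ### Existence of a pure common quasi-eigenvector -/

lemma exists_good (hr : 1 ≤ r) (hu : Function.Injective u)
    (v : M) (hv0 : v ≠ 0)
    (hv : ∀ i : Fin (n - 1), Top n r u M i v = -v ∨ Top n r u M i v = 0) :
    ∃ (w : M) (c : Fin n → Fin r), w ≠ 0 ∧ (∀ j, Xop n r u M j w = u (c j) • w) ∧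
      (∀ i : Fin (n - 1), ∃ z : ℂ, Top n r u M i w = z • w) := by
  classical
  set tv : Fin (n - 1) → ℂ := fun i => if Top n r u M i v = -v then -1 else 0 with htvdef
  have htv : ∀ i, Top n r u M i v = tv i • v := by
    intro i
    by_cases h : Top n r u M i v = -v
    · rw [h]; simp [htvdef, h]
    · rcases hv i with h' | h'
      · exact absurd h' h
      · rw [h']; simp [htvdef, h]
  have htv01 : ∀ i, tv i = -1 ∨ tv i = 0 := by
    intro i
    by_cases h : Top n r u M i v = -v <;> simp [htvdef, h]
  set wt : Fin (n - 1) → ℤ := fun i => if tv i = 0 then 1 else -1 with hwtdef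
  set Wt : Fin n → ℤ := fun p =>
    ∑ q ∈ Finset.univ.filter (fun q : Fin (n - 1) => (q : ℕ) < (p : ℕ)), wt q with hWtdef
  set Psi : (Fin n → Fin r) → ℤ := fun c => ∑ p, Wt p * ((c p : ℕ) : ℤ) with hPsidef
  have hWtdiff : ∀ i : Fin (n - 1), Wt (idx1 n i) = wt i + Wt (idx0 n i) := by
    intro i
    have hfil : Finset.univ.filter (fun q : Fin (n - 1) => (q : ℕ) < ((idx1 n i) : ℕ))
        = insert i (Finset.univ.filter (fun q : Fin (n - 1) => (q : ℕ) < ((idx0 n i) : ℕ))) := by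
      ext q
      simp only [Finset.mem_filter, Finset.mem_univ, true_and, Finset.mem_insert]
      simp only [Finset.mem_filter, Finset.mem_univ, true_and, Finset.mem_insert, idx0, idx1]
      constructor
      · intro hq
        rcases Nat.lt_or_ge (q : ℕ) (i : ℕ) with h | h
        · right; exact h
        · left; apply Fin.ext; omega
      · intro hq
        rcases hq with rfl | hq <;> omega
    have hni : i ∉ Finset.univ.filter (fun q : Fin (n - 1) => (q : ℕ) < ((idx0 n i) : ℕ)) := by
      simp [idx0]
    rw [hWtdef]
    simp only
    rw [hfil, Finset.sum_insert hni]
  have hPsiSw : ∀ (i : Fin (n - 1)) (c : Fin n → Fin r),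
      Psi (Sw n r i c) = Psi c + wt i * (((c (idx0 n i) : ℕ) : ℤ) - ((c (idx1 n i) : ℕ) : ℤ)) := by
    intro i c
    have key : ∀ p : Fin n, Wt p * ((Sw n r i c p : ℕ) : ℤ)
        = Wt p * ((c p : ℕ) : ℤ)
          + ((if p = idx0 n i then
                Wt (idx0 n i) * (((c (idx1 n i) : ℕ) : ℤ) - ((c (idx0 n i) : ℕ) : ℤ)) else 0)
            + (if p = idx1 n i then
                Wt (idx1 n i) * (((c (idx0 n i) : ℕ) : ℤ) - ((c (idx1 n i) : ℕ) : ℤ)) else 0)) := by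
      intro p
      by_cases h0 : p = idx0 n i
      · subst h0
        rw [Sw_apply0, if_pos rfl, if_neg (idx0_ne_idx1 n i)]
        ring
      · by_cases h1 : p = idx1 n i
        · subst h1
          rw [Sw_apply1, if_neg h0, if_pos rfl]
          ring
        · rw [Sw_apply_other n r i c p h0 h1, if_neg h0, if_neg h1]
          ring
    rw [hPsidef]
    simp only
    rw [Finset.sum_congr rfl fun p _ => key p, Finset.sum_add_distrib,
      Finset.sum_add_distrib, Finset.sum_ite_eq' Finset.univ (idx0 n i),
      Finset.sum_ite_eq' Finset.univ (idx1 n i), if_pos (Finset.mem_univ _),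
      if_pos (Finset.mem_univ _), hWtdiff i]
    ring
  have hv1 : ∑ c : Fin n → Fin r, (Eop n r u M c) v = v := by
    have := congrArg (fun f : Module.End ℂ M => f v) (sum_Eop n r u M hr hu)
    simpa using this
  set supp : Finset (Fin n → Fin r) := Finset.univ.filter (fun c => (Eop n r u M c) v ≠ 0)
    with hsuppdef
  have hsuppne : supp.Nonempty := by
    by_contra hempty
    rw [Finset.not_nonempty_iff_eq_empty] at hempty
    apply hv0
    rw [← hv1]
    apply Finset.sum_eq_zero
    intro c _
    by_contra hc
    have hmem : c ∈ supp := by rw [hsuppdef]; simp [hc]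
    rw [hempty] at hmem
    exact absurd hmem (Finset.notMem_empty c)
  obtain ⟨cs, hcs_mem, hcs_max⟩ := Finset.exists_max_image supp Psi hsuppne
  have hw0 : (Eop n r u M cs) v ≠ 0 := by
    rw [hsuppdef] at hcs_mem
    simpa using hcs_mem
  have hkill : ∀ d : Fin n → Fin r, Psi cs < Psi d → (Eop n r u M d) v = 0 := by
    intro d hd
    by_contra hne
    have hmem : d ∈ supp := by rw [hsuppdef]; simp [hne]
    exact absurd (hcs_max d hmem) (by omega)
  have hTsum : ∀ (i' : Fin (n - 1)) (c' : Fin n → Fin r), (Eop n r u M c') (Top n r u M i' v)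
      = ∑ d : Fin n → Fin r, (Eop n r u M c' * (Top n r u M i' * Eop n r u M d)) v := by
    intro i' c'
    conv_lhs => rw [show v = ∑ c : Fin n → Fin r, (Eop n r u M c) v from hv1.symm]
    rw [map_sum, map_sum]
    apply Finset.sum_congr rfl
    intro d _
    simp [Module.End.mul_apply]
  refine ⟨(Eop n r u M cs) v, cs, hw0, ?_, ?_⟩
  · intro j
    have := congrArg (fun f : Module.End ℂ M => f v) (Xop_mul_Eop n r u M j cs)
    simpa using this
  · intro i
    rcases lt_trichotomy (cs (idx0 n i)) (cs (idx1 n i)) with hlt | heq | hgt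
    · -- ascent at cs
      refine ⟨-1, ?_⟩
      set s' := Sw n r i cs with hs'def
      have hs'ne : s' ≠ cs := Sw_ne_of_ne n r i (ne_of_lt hlt)
      have hswsw : Sw n r i s' = cs := Sw_Sw n r i cs
      have hs'0 : s' (idx0 n i) = cs (idx1 n i) := Sw_apply0 n r i cs
      have hs'1 : s' (idx1 n i) = cs (idx0 n i) := Sw_apply1 n r i cs
      have hone : ∀ d : Fin n → Fin r,
          Eop n r u M s' * (Top n r u M i * Eop n r u M d)
            = if d = cs then Top n r u M i * Eop n r u M cs + Eop n r u M cs else 0 := by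
        intro d
        by_cases hd : d = cs
        · rw [hd, if_pos rfl, TY_asc n r u M hr hu i hlt, ← hs'def, if_pos rfl, if_neg hs'ne,
            sub_zero]
        · rw [if_neg hd]
          have hnotsw : s' ≠ Sw n r i d := by
            intro hcon
            apply hd
            have h2 := congrArg (Sw n r i) hcon
            rw [Sw_Sw n r i d] at h2
            rw [← h2, hswsw]
          rcases lt_trichotomy (d (idx0 n i)) (d (idx1 n i)) with hd2 | hd2 | hd2
          · rw [TY_asc n r u M hr hu i hd2, if_neg hnotsw, if_neg, sub_zero]
            intro hcon
            rw [hcon] at hs'0 hs'1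
            rw [← hs'0, ← hs'1] at hlt
            exact absurd hd2 (lt_asymm hlt)
          · rw [TY_blk n r u M hr hu i hd2, if_neg]
            intro hcon
            rw [hcon] at hs'0 hs'1
            rw [← hs'0, ← hs'1] at hlt
            rw [hd2] at hlt
            exact lt_irrefl _ hlt
          · rw [TY_desc n r u M hr hu i hd2, if_neg hnotsw]
      have heq1 : tv i • (Eop n r u M s') v
          = (Top n r u M i * Eop n r u M cs) v + (Eop n r u M cs) v := by
        calc tv i • (Eop n r u M s') v = (Eop n r u M s') (tv i • v) := by rw [map_smul]
          _ = (Eop n r u M s') (Top n r u M i v) := by rw [← htv i]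
          _ = ∑ d : Fin n → Fin r, (Eop n r u M s' * (Top n r u M i * Eop n r u M d)) v :=
              hTsum i s'
          _ = ∑ d : Fin n → Fin r,
              (if d = cs then (Top n r u M i * Eop n r u M cs + Eop n r u M cs) v else 0) := by
              apply Finset.sum_congr rfl
              intro d _
              rw [hone d]
              by_cases hd : d = cs
              · rw [if_pos hd, if_pos hd]
              · rw [if_neg hd, if_neg hd, LinearMap.zero_apply]
          _ = (Top n r u M i * Eop n r u M cs + Eop n r u M cs) v := by
              rw [Finset.sum_ite_eq' Finset.univ cs, if_pos (Finset.mem_univ _)]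
          _ = (Top n r u M i * Eop n r u M cs) v + (Eop n r u M cs) v := by
              rw [LinearMap.add_apply]
      have hTw : Top n r u M i ((Eop n r u M cs) v)
          = tv i • (Eop n r u M s') v - (Eop n r u M cs) v := by
        rw [heq1, Module.End.mul_apply]
        abel
      rcases htv01 i with h | h
      · -- tv i = -1 : need to kill E_{s'} v using maximality of Psi
        have hwt : wt i = -1 := by rw [hwtdef]; simp [h]
        have hpsi : Psi cs < Psi s' := by
          have hps := hPsiSw i cs
          rw [← hs'def, hwt] at hps
          have hlt' : ((cs (idx0 n i) : ℕ) : ℤ) < ((cs (idx1 n i) : ℕ) : ℤ) := by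
            exact_mod_cast hlt
          omega
        rw [hTw, hkill s' hpsi, smul_zero, zero_sub, neg_smul, one_smul]
      · rw [hTw, h, zero_smul, zero_sub, neg_smul, one_smul]
    · -- block at cs
      refine ⟨tv i, ?_⟩
      have hswcs : Sw n r i cs = cs := Sw_eq_of_eq n r i heq
      have hone : ∀ d : Fin n → Fin r,
          Eop n r u M cs * (Top n r u M i * Eop n r u M d)
            = if d = cs then Top n r u M i * Eop n r u M cs else 0 := by
        intro d
        by_cases hd : d = cs
        · rw [hd, if_pos rfl, TY_blk n r u M hr hu i heq, if_pos rfl]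
        · rw [if_neg hd]
          have hnotsw : cs ≠ Sw n r i d := by
            intro hcon
            apply hd
            have h2 := congrArg (Sw n r i) hcon
            rw [Sw_Sw n r i d] at h2
            rw [← h2, hswcs]
          have hnoteq : cs ≠ d := fun hcon => hd hcon.symm
          rcases lt_trichotomy (d (idx0 n i)) (d (idx1 n i)) with hd2 | hd2 | hd2
          · rw [TY_asc n r u M hr hu i hd2, if_neg hnotsw, if_neg hnoteq, sub_zero]
          · rw [TY_blk n r u M hr hu i hd2, if_neg hnoteq]
          · rw [TY_desc n r u M hr hu i hd2, if_neg hnotsw]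
      have heq1 : tv i • (Eop n r u M cs) v = (Top n r u M i * Eop n r u M cs) v := by
        calc tv i • (Eop n r u M cs) v = (Eop n r u M cs) (tv i • v) := by rw [map_smul]
          _ = (Eop n r u M cs) (Top n r u M i v) := by rw [← htv i]
          _ = ∑ d : Fin n → Fin r, (Eop n r u M cs * (Top n r u M i * Eop n r u M d)) v :=
              hTsum i cs
          _ = ∑ d : Fin n → Fin r,
              (if d = cs then (Top n r u M i * Eop n r u M cs) v else 0) := by
              apply Finset.sum_congr rfl
              intro d _
              rw [hone d]
              by_cases hd : d = cs
              · rw [if_pos hd, if_pos hd]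
              · rw [if_neg hd, if_neg hd, LinearMap.zero_apply]
          _ = (Top n r u M i * Eop n r u M cs) v := by
              rw [Finset.sum_ite_eq' Finset.univ cs, if_pos (Finset.mem_univ _)]
      rw [← Module.End.mul_apply, ← heq1]
    · -- descent at cs
      set s' := Sw n r i cs with hs'def
      have hs'ne : s' ≠ cs := Sw_ne_of_ne n r i (ne_of_gt hgt)
      have hswsw : Sw n r i s' = cs := Sw_Sw n r i cs
      have hs'0 : s' (idx0 n i) = cs (idx1 n i) := Sw_apply0 n r i cs
      have hs'1 : s' (idx1 n i) = cs (idx0 n i) := Sw_apply1 n r i cs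
      have hs'asc : s' (idx0 n i) < s' (idx1 n i) := by rw [hs'0, hs'1]; exact hgt
      have hone : ∀ d : Fin n → Fin r,
          Eop n r u M s' * (Top n r u M i * Eop n r u M d)
            = (if d = cs then Top n r u M i * Eop n r u M cs else 0)
              + (if d = s' then -(Eop n r u M s') else 0) := by
        intro d
        by_cases hd : d = cs
        · rw [hd, if_pos rfl, if_neg (fun hcon : cs = s' => hs'ne hcon.symm), add_zero,
            TY_desc n r u M hr hu i hgt, ← hs'def, if_pos rfl]
        · by_cases hds : d = s'
          · rw [hds, if_neg hs'ne, if_pos rfl, zero_add, TY_asc n r u M hr hu i hs'asc, hswsw,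
              if_neg hs'ne, if_pos rfl, zero_sub]
          · rw [if_neg hd, if_neg hds, add_zero]
            have hnotsw : s' ≠ Sw n r i d := by
              intro hcon
              apply hd
              have h2 := congrArg (Sw n r i) hcon
              rw [Sw_Sw n r i d] at h2
              rw [← h2, hswsw]
            rcases lt_trichotomy (d (idx0 n i)) (d (idx1 n i)) with hd2 | hd2 | hd2
            · rw [TY_asc n r u M hr hu i hd2, if_neg hnotsw, if_neg
                (fun hcon : s' = d => hds hcon.symm), sub_zero]
            · rw [TY_blk n r u M hr hu i hd2, if_neg (fun hcon : s' = d => hds hcon.symm)]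
            · rw [TY_desc n r u M hr hu i hd2, if_neg hnotsw]
      have heq1 : tv i • (Eop n r u M s') v
          = (Top n r u M i * Eop n r u M cs) v - (Eop n r u M s') v := by
        calc tv i • (Eop n r u M s') v = (Eop n r u M s') (tv i • v) := by rw [map_smul]
          _ = (Eop n r u M s') (Top n r u M i v) := by rw [← htv i]
          _ = ∑ d : Fin n → Fin r, (Eop n r u M s' * (Top n r u M i * Eop n r u M d)) v :=
              hTsum i s'
          _ = ∑ d : Fin n → Fin r,
              ((if d = cs then (Top n r u M i * Eop n r u M cs) v else 0)
                + (if d = s' then -((Eop n r u M s') v) else 0)) := by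
              apply Finset.sum_congr rfl
              intro d _
              rw [hone d, LinearMap.add_apply]
              congr 1
              · by_cases hd : d = cs
                · rw [if_pos hd, if_pos hd]
                · rw [if_neg hd, if_neg hd, LinearMap.zero_apply]
              · by_cases hd : d = s'
                · rw [if_pos hd, if_pos hd, LinearMap.neg_apply]
                · rw [if_neg hd, if_neg hd, LinearMap.zero_apply]
          _ = (Top n r u M i * Eop n r u M cs) v - (Eop n r u M s') v := by
              rw [Finset.sum_add_distrib, Finset.sum_ite_eq' Finset.univ cs,
                Finset.sum_ite_eq' Finset.univ s', if_pos (Finset.mem_univ _),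
                if_pos (Finset.mem_univ _)]
              abel
      have hTw : Top n r u M i ((Eop n r u M cs) v)
          = tv i • (Eop n r u M s') v + (Eop n r u M s') v := by
        rw [heq1, Module.End.mul_apply]
        abel
      rcases htv01 i with h | h
      · refine ⟨0, ?_⟩
        rw [hTw, h, neg_smul, one_smul, neg_add_cancel, zero_smul]
      · -- tv i = 0 : need to kill E_{s'} v using maximality of Psi
        refine ⟨0, ?_⟩
        have hwt : wt i = 1 := by rw [hwtdef]; simp [h]
        have hpsi : Psi cs < Psi s' := by
          have hps := hPsiSw i cs
          rw [← hs'def, hwt] at hps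
          have hgt' : ((cs (idx1 n i) : ℕ) : ℤ) < ((cs (idx0 n i) : ℕ) : ℤ) := by
            exact_mod_cast hgt
          omega
        rw [hTw, hkill s' hpsi, smul_zero, zero_add, zero_smul]

/-! ### A common quasi-eigenvector for all the `T_i` via the chain lemma -/

lemma exists_T_eigen (hM : Nontrivial M) :
    ∃ v : M, v ≠ 0 ∧ ∀ i : Fin (n - 1), Top n r u M i v = -v ∨ Top n r u M i v = 0 := by
  classical
  obtain ⟨v0, hv0⟩ := exists_ne (0 : M)
  set π : ℕ → Module.End ℂ M := fun k =>
    if h : 1 ≤ k ∧ k ≤ n - 1 then -(Top n r u M ⟨k - 1, by omega⟩) else 1 with hπdef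
  have hid : ∀ k, π k * π k = π k := by
    intro k
    by_cases h : 1 ≤ k ∧ k ≤ n - 1
    · rw [hπdef]
      simp only [dif_pos h]
      rw [neg_mul_neg, relT2 n r u M]
    · rw [hπdef]
      simp only [dif_neg h, one_mul]
  have hbr : ∀ k, π k * π (k + 1) * π k = π (k + 1) * π k * π (k + 1) := by
    intro k
    by_cases h1 : 1 ≤ k ∧ k ≤ n - 1
    · by_cases h2 : 1 ≤ k + 1 ∧ k + 1 ≤ n - 1
      · have hb := relBraid n r u M ⟨k - 1, by omega⟩ ⟨k + 1 - 1, by omega⟩ (by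
          simp only []
          omega)
        rw [hπdef]
        simp only [dif_pos h1, dif_pos h2]
        linear_combination (norm := noncomm_ring) -hb
      · have hπ1 : π (k + 1) = 1 := by rw [hπdef]; simp only [dif_neg h2]
        rw [hπ1, mul_one, one_mul, mul_one, hid k]
    · have hπ0 : π k = 1 := by rw [hπdef]; simp only [dif_neg h1]
      rw [hπ0]
      simp only [one_mul, mul_one]
      exact (hid (k + 1)).symm
  have hcm : ∀ i j, i + 2 ≤ j → π i * π j = π j * π i := by
    intro i j hij
    by_cases h1 : 1 ≤ i ∧ i ≤ n - 1
    · by_cases h2 : 1 ≤ j ∧ j ≤ n - 1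
      · rw [hπdef]
        simp only [dif_pos h1, dif_pos h2]
        rw [neg_mul_neg, neg_mul_neg]
        exact relTTcomm n r u M _ _ (by left; simp only []; omega)
      · have hπ2 : π j = 1 := by rw [hπdef]; simp only [dif_neg h2]
        rw [hπ2, mul_one, one_mul]
    · have hπ1 : π i = 1 := by rw [hπdef]; simp only [dif_neg h1]
      rw [hπ1, mul_one, one_mul]
  obtain ⟨w, hw0, hgood⟩ := AKS0Aux.chain_lemma π hid hbr hcm (n - 1) v0 hv0
  refine ⟨w, hw0, ?_⟩
  intro i
  have hk : 1 ≤ (i : ℕ) + 1 ∧ (i : ℕ) + 1 ≤ n - 1 := ⟨by omega, by have := i.2; omega⟩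
  have hg := hgood ((i : ℕ) + 1) hk.1 hk.2
  rw [hπdef] at hg
  simp only [dif_pos hk] at hg
  have hfin : (⟨(i : ℕ) + 1 - 1, by omega⟩ : Fin (n - 1)) = i := by
    apply Fin.ext
    simp
  rw [hfin] at hg
  rcases hg with h | h
  · left
    have h' : -(Top n r u M i w) = w := by simpa using h
    exact neg_eq_iff_eq_neg.mp h'
  · right
    have h' : -(Top n r u M i w) = 0 := by simpa using h
    simpa [neg_eq_zero] using h'

end Main

/-- every simple module over the 0-Ariki-Koike-Shoji algebra `H_{n,r}(0)`
is one-dimensional over `ℂ`. -/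
theorem simple_modules_one_dimensional (n r : ℕ) (hn : 1 ≤ n) (hr : 1 ≤ r)
    (u : Fin r → ℂ) (hu : Function.Injective u)
    (M : Type) [AddCommGroup M] [Module ℂ M] [Module (AKSAlg n r u 0) M]
    [IsScalarTower ℂ (AKSAlg n r u 0) M] [IsSimpleModule (AKSAlg n r u 0) M] :
    Module.finrank ℂ M = 1 := by
  classical
  have hMnt : Nontrivial M := IsSimpleModule.nontrivial (R := AKSAlg n r u 0) (M := M)
  obtain ⟨v, hv0, hvT⟩ := exists_T_eigen n r u M hMnt
  obtain ⟨w, c, hw0, hX, hT⟩ := exists_good n r u M hr hu v hv0 hvT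
  -- every element of the algebra maps `w` into its line
  have hgen : ∀ a : AKSAlg n r u 0, ∃ z : ℂ, a • w = z • w := by
    set S : Subalgebra ℂ (AKSAlg n r u 0) :=
      { carrier := {a | ∃ z : ℂ, a • w = z • w}
        mul_mem' := by
          rintro a b ⟨za, hza⟩ ⟨zb, hzb⟩
          refine ⟨zb * za, ?_⟩
          rw [mul_smul, hzb, smul_comm, hza, smul_smul]
        add_mem' := by
          rintro a b ⟨za, hza⟩ ⟨zb, hzb⟩
          exact ⟨za + zb, by rw [add_smul, hza, hzb, add_smul]⟩
        algebraMap_mem' := fun z => ⟨z, by rw [algebraMap_smul]⟩ } with hSdef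
    have hS : S = ⊤ := by
      have h1 : Algebra.adjoin ℂ
          (Set.range ((RingQuot.mkAlgHom ℂ (Rel n r u 0)) ∘ FreeAlgebra.ι ℂ)) = ⊤ := by
        rw [Set.range_comp, ← AlgHom.map_adjoin, FreeAlgebra.adjoin_range_ι, Algebra.map_top]
        exact (AlgHom.range_eq_top _).mpr (RingQuot.mkAlgHom_surjective ℂ _)
      refine le_antisymm le_top ?_
      rw [← h1]
      apply Algebra.adjoin_le
      rintro x ⟨g, rfl⟩
      rcases g with i | j
      · obtain ⟨z, hz⟩ := hT i
        exact ⟨z, hz⟩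
      · exact ⟨u (c j), hX j⟩
    intro a
    have ha : a ∈ S := by rw [hS]; trivial
    exact ha
  set N : Submodule (AKSAlg n r u 0) M :=
    { carrier := {m | ∃ z : ℂ, m = z • w}
      add_mem' := by
        rintro a b ⟨za, rfl⟩ ⟨zb, rfl⟩
        exact ⟨za + zb, (add_smul za zb w).symm⟩
      zero_mem' := ⟨0, (zero_smul ℂ w).symm⟩
      smul_mem' := by
        rintro a m ⟨z, rfl⟩
        obtain ⟨z', hz'⟩ := hgen a
        exact ⟨z * z', by rw [smul_comm, hz', smul_smul]⟩ } with hNdef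
  have hwN : w ∈ N := ⟨1, (one_smul ℂ w).symm⟩
  have hNtop : N = ⊤ := by
    rcases eq_bot_or_eq_top N with hbot | htop
    · exfalso
      rw [hbot] at hwN
      exact hw0 (by simpa using hwN)
    · exact htop
  apply finrank_eq_one w hw0
  intro m
  have hm : m ∈ N := by rw [hNtop]; trivial
  obtain ⟨z, hz⟩ := hm
  exact ⟨z, hz.symm⟩


end AKS0
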